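/- Let p > 2 and let ζ range over the roots of unity of order dividing 2^n − 1 in C_p. If |x| > 1 then 2^{-n} Σ_{ζ^{2^n - 1} = 1} log|x − ζ| → log|x| as n → ∞; if |x| < 1 then the limit is 0; if |x| = 1 and x is not a root of unity of order prime to p then the limit is also 0. -/

import Mathlib

open Polynomial Multiset

section Aux
variable {K : Type*} [NormedField K] [IsUltrametricDist K]

lemma aux_norm_root (N : ℕ) (hN : N ≠ 0) {z : K} (hz : z ^ N = 1) : ‖z‖ = 1 := by
  have h : ‖z‖ ^ N = 1 := by rw [← norm_pow, hz, norm_one]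
  rcases lt_trichotomy ‖z‖ 1 with hlt | heq | hgt
  · exact absurd h (by have := pow_lt_one₀ (norm_nonneg z) hlt hN; linarith)
  · exact heq
  · exact absurd h (by have := one_lt_pow₀ hgt hN; linarith)

lemma aux_norm_sub_le_one {a b : K} (ha : ‖a‖ ≤ 1) (hb : ‖b‖ ≤ 1) : ‖a - b‖ ≤ 1 := by
  rw [sub_eq_add_neg]
  exact (IsUltrametricDist.norm_add_le_max a (-b)).trans (by simp [ha, hb])

-- ‖ω^a − 1‖ ≤ ‖ω − 1‖ when ‖ω‖ ≤ 1
lemma aux_geom (ω : K) (hω : ‖ω‖ ≤ 1) (a : ℕ) : ‖ω ^ a - 1‖ ≤ ‖ω - 1‖ := by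
  induction a with
  | zero => simp
  | succ a ih =>
    have : ω ^ (a+1) - 1 = ω ^ a * (ω - 1) + (ω ^ a - 1) := by ring
    rw [this]
    refine (IsUltrametricDist.norm_add_le_max _ _).trans (max_le ?_ ih)
    rw [norm_mul]
    calc ‖ω ^ a‖ * ‖ω - 1‖ ≤ 1 * ‖ω - 1‖ := by
          apply mul_le_mul_of_nonneg_right _ (norm_nonneg _)
          exact (norm_pow ω a ▸ pow_le_one₀ (norm_nonneg ω) hω)
      _ = ‖ω - 1‖ := one_mul _

end Aux

section Aux2
variable {p : ℕ} [hp : Fact p.Prime] {K : Type*} [NormedField K] [IsUltrametricDist K]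

lemma aux_norm_natCast (hpK : ‖(p : K)‖ = (p : ℝ)⁻¹) {N : ℕ} (hN : ¬ p ∣ N) :
    ‖(N : K)‖ = 1 := by
  have hple : ‖(N : K)‖ ≤ 1 := IsUltrametricDist.norm_natCast_le_one K N
  have hcop : Nat.gcd N p = 1 := Nat.Coprime.symm ((Nat.Prime.coprime_iff_not_dvd hp.out).mpr hN)
  have hb := Nat.gcd_eq_gcd_ab N p
  rw [hcop] at hb
  have hcast : (1 : K) = (N : K) * ((Nat.gcdA N p : ℤ) : K) + (p : K) * ((Nat.gcdB N p : ℤ) : K) := by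
    have := congrArg (fun z : ℤ => ((z : ℤ) : K)) hb
    push_cast at this ⊢
    simpa using this
  by_contra hne
  have hlt : ‖(N : K)‖ < 1 := lt_of_le_of_ne hple hne
  have hp1 : ‖(p : K)‖ < 1 := by
    rw [hpK]
    rw [inv_lt_one_iff₀]
    right
    exact_mod_cast hp.out.one_lt
  have h1 : (1 : ℝ) = ‖(1 : K)‖ := norm_one.symm
  have := IsUltrametricDist.norm_add_le_max ((N : K) * ((Nat.gcdA N p : ℤ) : K))
    ((p : K) * ((Nat.gcdB N p : ℤ) : K))
  rw [← hcast] at this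
  have hA : ‖((Nat.gcdA N p : ℤ) : K)‖ ≤ 1 := IsUltrametricDist.norm_intCast_le_one K _
  have hB : ‖((Nat.gcdB N p : ℤ) : K)‖ ≤ 1 := IsUltrametricDist.norm_intCast_le_one K _
  rw [norm_one] at this
  rcases le_max_iff.mp this with h | h
  · rw [norm_mul] at h
    have h2 := mul_le_mul_of_nonneg_left hA (norm_nonneg ((N : K)))
    rw [mul_one] at h2
    linarith
  · rw [norm_mul] at h
    have h2 := mul_le_mul_of_nonneg_left hB (norm_nonneg ((p : K)))
    rw [mul_one] at h2
    linarith

-- distance of nontrivial prime-to-p root of unity from 1 is 1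
lemma aux_dist_one (hpK : ‖(p : K)‖ = (p : ℝ)⁻¹) {N : ℕ} (hN : ¬ p ∣ N) {z : K}
    (hz : z ^ N = 1) (hz1 : z ≠ 1) : ‖z - 1‖ = 1 := by
  have hN0 : N ≠ 0 := by rintro rfl; exact hN (dvd_zero p)
  have hnz : ‖z‖ = 1 := aux_norm_root N hN0 hz
  have hle : ‖z - 1‖ ≤ 1 := aux_norm_sub_le_one hnz.le (le_of_eq norm_one)
  rcases lt_or_eq_of_le hle with hlt | heq
  · exfalso
    have hS : (∑ i ∈ Finset.range N, z ^ i) * (z - 1) = 0 := by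
      rw [geom_sum_mul, hz, sub_self]
    have hSz : (∑ i ∈ Finset.range N, z ^ i) = 0 :=
      (mul_eq_zero.mp hS).resolve_right (sub_ne_zero_of_ne hz1)
    have hdiff : ‖(∑ i ∈ Finset.range N, z ^ i) - (N : K)‖ < 1 := by
      have : (∑ i ∈ Finset.range N, z ^ i) - (N : K)
          = ∑ i ∈ Finset.range N, (z ^ i - 1) := by
        rw [Finset.sum_sub_distrib]
        simp
      rw [this]
      rcases eq_or_lt_of_le (norm_nonneg (z-1)) with h0 | h0
      · calc ‖∑ i ∈ Finset.range N, (z ^ i - 1)‖ ≤ 0 := by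
              apply IsUltrametricDist.norm_sum_le_of_forall_le_of_nonneg le_rfl
              intro i _
              exact (aux_geom z hnz.le i).trans (le_of_eq h0.symm)
          _ < 1 := one_pos
      · calc ‖∑ i ∈ Finset.range N, (z ^ i - 1)‖ ≤ ‖z - 1‖ := by
              apply IsUltrametricDist.norm_sum_le_of_forall_le_of_nonneg (norm_nonneg _)
              intro i _
              exact aux_geom z hnz.le i
          _ < 1 := hlt
    rw [hSz, zero_sub, norm_neg, aux_norm_natCast hpK hN] at hdiff
    exact lt_irrefl _ hdiff
  · exact heq
end Aux2

section Aux3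
variable {p : ℕ} [hp : Fact p.Prime] {K : Type*} [NormedField K] [IsUltrametricDist K]

lemma aux_ppow_lt (hpK : ‖(p : K)‖ = (p : ℝ)⁻¹) {e : ℕ} {ξ : K} (hξ : ξ ^ p ^ e = 1) :
    ‖ξ - 1‖ < 1 := by
  induction e generalizing ξ with
  | zero => simp only [pow_zero, pow_one] at hξ; simp [hξ]
  | succ e ih =>
    have hp0 : p ≠ 0 := hp.out.ne_zero
    have hξn : ‖ξ‖ = 1 := aux_norm_root (p ^ (e+1)) (pow_ne_zero _ hp0) hξ
    have hrec : (ξ ^ p) ^ p ^ e = 1 := by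
      rw [← pow_mul, ← pow_succ']; exact hξ
    have hIH : ‖ξ ^ p - 1‖ < 1 := ih hrec
    set u := ξ - 1 with hu
    have hun : ‖u‖ ≤ 1 := aux_norm_sub_le_one hξn.le (le_of_eq norm_one)
    have hexp : ξ ^ p = ∑ i ∈ Finset.range (p + 1), u ^ i * 1 ^ (p - i) * (p.choose i : K) := by
      have : ξ = u + 1 := by rw [hu]; ring
      rw [this, add_pow]
    have hsplit : ξ ^ p = u ^ p + ((∑ i ∈ Finset.range (p - 1), u ^ (i+1) * (p.choose (i+1) : K)) + 1) := by
      rw [hexp, Finset.sum_range_succ]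
      have hpp : p = (p - 1) + 1 := (Nat.succ_pred_eq_of_pos hp.out.pos).symm
      rw [show (∑ i ∈ Finset.range p, u ^ i * 1 ^ (p - i) * (p.choose i : K))
            = ∑ i ∈ Finset.range ((p-1)+1), u ^ i * 1 ^ (p - i) * (p.choose i : K) by rw [← hpp]]
      rw [Finset.sum_range_succ']
      simp only [Nat.choose_self, Nat.choose_zero_right, Nat.cast_one, pow_zero, one_mul,
        mul_one, one_pow]
      ring
    have hkey : u ^ p = (ξ ^ p - 1) - ∑ i ∈ Finset.range (p - 1), u ^ (i+1) * (p.choose (i+1) : K) := by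
      rw [hsplit]; ring
    have hsb : ‖∑ i ∈ Finset.range (p - 1), u ^ (i+1) * (p.choose (i+1) : K)‖ ≤ (p : ℝ)⁻¹ := by
      apply IsUltrametricDist.norm_sum_le_of_forall_le_of_nonneg (by positivity)
      intro i hi
      have hi1 : i + 1 < p := by
        have := Finset.mem_range.mp hi; omega
      obtain ⟨t, ht⟩ := hp.out.dvd_choose_self (Nat.succ_ne_zero i) hi1
      rw [norm_mul, ht]
      push_cast
      rw [norm_mul, hpK]
      have h1 : ‖u ^ (i+1)‖ ≤ 1 := by
        rw [norm_pow]; exact pow_le_one₀ (norm_nonneg u) hun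
      have h2 : ‖(t : K)‖ ≤ 1 := IsUltrametricDist.norm_natCast_le_one K t
      have hppos : (0:ℝ) < (p : ℝ)⁻¹ := by
        have : (0:ℝ) < (p:ℝ) := by exact_mod_cast hp.out.pos
        positivity
      have hfin : ‖u ^ (i+1)‖ * ((p:ℝ)⁻¹ * ‖(t : K)‖) ≤ 1 * ((p:ℝ)⁻¹ * 1) := by
        apply mul_le_mul h1 _ (by positivity) zero_le_one
        exact mul_le_mul_of_nonneg_left h2 hppos.le
      simpa using hfin
    have hup : ‖u‖ ^ p < 1 := by
      rw [← norm_pow, hkey]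
      rw [sub_eq_add_neg]
      refine lt_of_le_of_lt (IsUltrametricDist.norm_add_le_max _ _) (max_lt hIH ?_)
      rw [norm_neg]
      refine lt_of_le_of_lt hsb ?_
      rw [inv_lt_one_iff₀]
      right
      exact_mod_cast hp.out.one_lt
    by_contra hcon
    push_neg at hcon
    have : (1:ℝ) ≤ ‖u‖ ^ p := one_le_pow₀ hcon
    linarith

lemma aux_ppow_ge (hpK : ‖(p : K)‖ = (p : ℝ)⁻¹) {e : ℕ} {ξ : K} (hξ : ξ ^ p ^ e = 1)
    (hne : ξ ≠ 1) : (p : ℝ)⁻¹ ≤ ‖ξ - 1‖ := by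
  induction e generalizing ξ with
  | zero => simp only [pow_zero, pow_one] at hξ; exact absurd hξ hne
  | succ e ih =>
    have hp0 : p ≠ 0 := hp.out.ne_zero
    have hξn : ‖ξ‖ = 1 := aux_norm_root (p ^ (e+1)) (pow_ne_zero _ hp0) hξ
    by_cases h : ξ ^ p ^ e = 1
    · exact ih h hne
    · set y := ξ ^ p ^ e with hy
      have hyp : y ^ p = 1 := by rw [hy, ← pow_mul, ← pow_succ]; exact hξ
      have hyn : ‖y‖ = 1 := by rw [hy, norm_pow, hξn, one_pow]
      have hS : (∑ i ∈ Finset.range p, y ^ i) * (y - 1) = 0 := by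
        rw [geom_sum_mul, hyp, sub_self]
      have hS0 : (∑ i ∈ Finset.range p, y ^ i) = 0 :=
        (mul_eq_zero.mp hS).resolve_right (sub_ne_zero_of_ne h)
      have hpsum : (p : K) = ∑ i ∈ Finset.range p, ((1:K) - y ^ i) := by
        rw [Finset.sum_sub_distrib, hS0]
        simp
      have hbound : ‖(p : K)‖ ≤ ‖y - 1‖ := by
        rw [hpsum]
        apply IsUltrametricDist.norm_sum_le_of_forall_le_of_nonneg (norm_nonneg _)
        intro i _
        rw [← norm_neg]
        simpa [neg_sub] using aux_geom y hyn.le i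
      rw [hpK] at hbound
      calc (p:ℝ)⁻¹ ≤ ‖y - 1‖ := hbound
        _ ≤ ‖ξ - 1‖ := by rw [hy]; exact aux_geom ξ hξn.le (p ^ e)

lemma aux_ppow_of_close (hpK : ‖(p : K)‖ = (p : ℝ)⁻¹) {N : ℕ} (hN : N ≠ 0) {z : K}
    (hz : z ^ N = 1) (hcl : ‖z - 1‖ < 1) : z ^ p ^ (N.factorization p) = 1 := by
  set k := N.factorization p with hk
  have hzn : ‖z‖ = 1 := aux_norm_root N hN hz
  have hsplit : p ^ k * (N / p ^ k) = N := Nat.ordProj_mul_ordCompl_eq_self N p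
  have hpm' : ¬ p ∣ (N / p ^ k) := Nat.not_dvd_ordCompl hp.out hN
  have hw : (z ^ p ^ k) ^ (N / p ^ k) = 1 := by rw [← pow_mul, hsplit]; exact hz
  by_contra hne
  have := aux_dist_one hpK hpm' hw hne
  have hle : ‖z ^ p ^ k - 1‖ ≤ ‖z - 1‖ := aux_geom z hzn.le _
  linarith

end Aux3

section Aux4
variable {K : Type*} [NormedField K] [IsAlgClosed K] [CharZero K]

lemma aux_norm_multiset_prod (s : Multiset K) : ‖s.prod‖ = (s.map (fun a => ‖a‖)).prod := by
  induction s using Multiset.induction_on with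
  | empty => simp
  | cons a s ih => simp [ih]

lemma aux_log_multiset_sum (x : K) (s : Multiset K) (h : ∀ a ∈ s, x - a ≠ 0) :
    (s.map (fun a => Real.log ‖x - a‖)).sum = Real.log ((s.map (fun a => ‖x - a‖)).prod) := by
  induction s using Multiset.induction_on with
  | empty => simp
  | cons a s ih =>
    have ha : ‖x - a‖ ≠ 0 := norm_ne_zero_iff.mpr (h a (Multiset.mem_cons_self a s))
    have hprod : ((s.map (fun a => ‖x - a‖)).prod) ≠ 0 := by
      apply Multiset.prod_ne_zero
      intro hc
      obtain ⟨b, hb, hb2⟩ := Multiset.mem_map.mp hc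
      exact norm_ne_zero_iff.mpr (h b (Multiset.mem_cons_of_mem hb)) hb2
    simp only [Multiset.map_cons, Multiset.sum_cons, Multiset.prod_cons]
    rw [Real.log_mul ha hprod, ih (fun b hb => h b (Multiset.mem_cons_of_mem hb))]

variable (K) in
lemma aux_P_ne (N : ℕ) (hN : N ≠ 0) : (X ^ N - 1 : K[X]) ≠ 0 := by
  have h1 : (X ^ N - 1 : K[X]) = X ^ N - C 1 := by rw [map_one]
  rw [h1]
  exact X_pow_sub_C_ne_zero (Nat.pos_of_ne_zero hN) 1

lemma aux_mem_roots {N : ℕ} (hN : N ≠ 0) {η : K} :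
    η ∈ (X ^ N - 1 : K[X]).roots ↔ η ^ N = 1 := by
  rw [mem_roots (aux_P_ne K N hN), IsRoot.def]
  simp [sub_eq_zero]

lemma aux_card {N : ℕ} : Multiset.card (X ^ N - 1 : K[X]).roots = N := by
  rcases eq_or_ne N 0 with rfl | hN
  · simp
  have h1 : (X ^ N - 1 : K[X]) = X ^ N - C 1 := by rw [map_one]
  have hs : Splits (X ^ N - 1 : K[X]) := IsAlgClosed.splits _
  rw [Polynomial.splits_iff_card_roots.mp hs, h1, natDegree_X_pow_sub_C]

lemma aux_nodup {N : ℕ} (hN : N ≠ 0) : ((X ^ N - 1 : K[X]).roots).Nodup := by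
  have h1 : (X ^ N - 1 : K[X]) = X ^ N - C 1 := by rw [map_one]
  apply Polynomial.nodup_roots
  rw [h1]
  exact Polynomial.separable_X_pow_sub_C 1 (by exact_mod_cast hN) one_ne_zero

lemma aux_prod_eq {N : ℕ} (hN : N ≠ 0) :
    (X ^ N - 1 : K[X]) = (((X ^ N - 1 : K[X]).roots).map (fun a => X - C a)).prod := by
  have h1 : (X ^ N - 1 : K[X]) = X ^ N - C 1 := by rw [map_one]
  have hm : (X ^ N - 1 : K[X]).Monic := by rw [h1]; exact monic_X_pow_sub_C 1 hN
  exact (IsAlgClosed.splits _).eq_prod_roots_of_monic hm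

-- evaluation of the polynomial at any point as a product
lemma aux_eval_prod {N : ℕ} (hN : N ≠ 0) (z : K) :
    z ^ N - 1 = (((X ^ N - 1 : K[X]).roots).map (fun a => z - a)).prod := by
  have := congrArg (fun q => Polynomial.eval z q) (aux_prod_eq (K := K) hN)
  simp only [eval_sub, eval_pow, eval_X, eval_one, eval_multiset_prod, Multiset.map_map] at this
  rw [this]
  congr 1
  apply Multiset.map_congr rfl
  intro a _
  simp

lemma aux_deriv_prod [DecidableEq K] {N : ℕ} (hN : N ≠ 0) {η1 : K}
    (hη1 : η1 ∈ (X ^ N - 1 : K[X]).roots) :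
    ((((X ^ N - 1 : K[X]).roots).erase η1).map (fun a => η1 - a)).prod
      = (N : K) * η1 ^ (N - 1) := by
  have hfact : (X ^ N - 1 : K[X])
      = (X - C η1) * (((((X ^ N - 1 : K[X]).roots).erase η1)).map
          (fun a => (X : K[X]) - C a)).prod := by
    conv_lhs => rw [aux_prod_eq hN, ← Multiset.cons_erase hη1]
    rw [Multiset.map_cons, Multiset.prod_cons]
  have heval : Polynomial.eval η1 (derivative (X ^ N - 1 : K[X]))
      = (N : K) * η1 ^ (N - 1) := by
    rw [derivative_sub, derivative_one, derivative_X_pow, sub_zero]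
    simp
  rw [hfact, derivative_mul, derivative_sub, derivative_X, derivative_C, sub_zero,
    one_mul] at heval
  simp only [eval_add, eval_mul, eval_sub, eval_X, eval_C, sub_self, zero_mul, add_zero] at heval
  rw [← heval, eval_multiset_prod, Multiset.map_map]
  congr 1
  apply Multiset.map_congr rfl
  intro a _
  simp

end Aux4

section Aux5
variable {α : Type*}

lemma aux_msum_nonpos {s : Multiset α} {f : α → ℝ} (h : ∀ a ∈ s, f a ≤ 0) :
    (s.map f).sum ≤ 0 := by
  induction s using Multiset.induction_on with
  | empty => simp
  | cons a s ih =>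
    simp only [Multiset.map_cons, Multiset.sum_cons]
    have := h a (Multiset.mem_cons_self a s)
    have := ih (fun b hb => h b (Multiset.mem_cons_of_mem hb))
    linarith

lemma aux_mprod_nonneg {s : Multiset α} {f : α → ℝ} (h : ∀ a ∈ s, 0 ≤ f a) :
    0 ≤ (s.map f).prod := by
  apply Multiset.prod_nonneg
  intro a ha
  obtain ⟨b, hb, rfl⟩ := Multiset.mem_map.mp ha
  exact h b hb

lemma aux_mprod_le_one {s : Multiset α} {f : α → ℝ} (h : ∀ a ∈ s, 0 ≤ f a ∧ f a ≤ 1) :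
    (s.map f).prod ≤ 1 := by
  induction s using Multiset.induction_on with
  | empty => simp
  | cons a s ih =>
    simp only [Multiset.map_cons, Multiset.prod_cons]
    have h1 := h a (Multiset.mem_cons_self a s)
    have h2 := ih (fun b hb => h b (Multiset.mem_cons_of_mem hb))
    have h3 : (0:ℝ) ≤ (s.map f).prod := aux_mprod_nonneg (fun b hb => (h b (Multiset.mem_cons_of_mem hb)).1)
    nlinarith

lemma aux_mprod_eq_one {s : Multiset α} {f : α → ℝ} (h : ∀ a ∈ s, f a = 1) :
    (s.map f).prod = 1 := by
  induction s using Multiset.induction_on with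
  | empty => simp
  | cons a s ih =>
    simp only [Multiset.map_cons, Multiset.prod_cons]
    rw [h a (Multiset.mem_cons_self a s), one_mul,
      ih (fun b hb => h b (Multiset.mem_cons_of_mem hb))]

lemma aux_mprod_le_mprod {s : Multiset α} {f g : α → ℝ}
    (h : ∀ a ∈ s, 0 ≤ f a ∧ f a ≤ g a) : (s.map f).prod ≤ (s.map g).prod := by
  induction s using Multiset.induction_on with
  | empty => simp
  | cons a s ih =>
    simp only [Multiset.map_cons, Multiset.prod_cons]
    have h1 := h a (Multiset.mem_cons_self a s)
    have h2 := ih (fun b hb => h b (Multiset.mem_cons_of_mem hb))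
    have h3 : (0:ℝ) ≤ (s.map f).prod := aux_mprod_nonneg (fun b hb => (h b (Multiset.mem_cons_of_mem hb)).1)
    have h4 : 0 ≤ g a := le_trans h1.1 h1.2
    nlinarith

-- product over a sub-multiset is at least the product over the whole, when factors in [0,1]
lemma aux_mprod_sub_ge {s t : Multiset α} {f : α → ℝ} (hst : s ≤ t)
    (h : ∀ a ∈ t, 0 ≤ f a ∧ f a ≤ 1) : (t.map f).prod ≤ (s.map f).prod := by
  obtain ⟨u, rfl⟩ := Multiset.le_iff_exists_add.mp hst
  rw [Multiset.map_add, Multiset.prod_add]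
  have hu : (u.map f).prod ≤ 1 :=
    aux_mprod_le_one (fun a ha => h a (Multiset.mem_add.mpr (Or.inr ha)))
  have hs0 : 0 ≤ (s.map f).prod :=
    aux_mprod_nonneg (fun a ha => (h a (Multiset.mem_add.mpr (Or.inl ha))).1)
  have hu0 : 0 ≤ (u.map f).prod :=
    aux_mprod_nonneg (fun a ha => (h a (Multiset.mem_add.mpr (Or.inr ha))).1)
  nlinarith

end Aux5

section Aux6
variable {p : ℕ} [hp : Fact p.Prime] {K : Type*} [NormedField K] [IsUltrametricDist K]
  [IsAlgClosed K] [CharZero K]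

lemma aux_norm_N (hpK : ‖(p : K)‖ = (p : ℝ)⁻¹) {N : ℕ} (hN : N ≠ 0) :
    ‖(N : K)‖ = ((p : ℝ)⁻¹) ^ (N.factorization p) := by
  conv_lhs => rw [← Nat.ordProj_mul_ordCompl_eq_self N p]
  push_cast
  rw [norm_mul, norm_pow, hpK, aux_norm_natCast hpK (Nat.not_dvd_ordCompl hp.out hN), mul_one]

-- the sum of logs when x is itself a root
lemma aux_sum_root (hpK : ‖(p : K)‖ = (p : ℝ)⁻¹) {N : ℕ} (hN : N ≠ 0) {x : K}
    (hx1 : ‖x‖ = 1) (hxN : x ^ N = 1) :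
    (((X ^ N - 1 : K[X]).roots).map (fun a => Real.log ‖x - a‖)).sum
      = -((N.factorization p : ℝ) * Real.log p) := by
  classical
  have hxR : x ∈ (X ^ N - 1 : K[X]).roots := (aux_mem_roots hN).mpr hxN
  have hnd : ((X ^ N - 1 : K[X]).roots).Nodup := aux_nodup hN
  rw [← Multiset.cons_erase hxR, Multiset.map_cons, Multiset.sum_cons]
  rw [sub_self, norm_zero, Real.log_zero, zero_add]
  have hne : ∀ a ∈ ((X ^ N - 1 : K[X]).roots).erase x, x - a ≠ 0 := by
    intro a ha
    have := (hnd.mem_erase_iff.mp ha).1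
    exact sub_ne_zero_of_ne (Ne.symm this)
  rw [aux_log_multiset_sum x _ hne]
  have hprod : ((((X ^ N - 1 : K[X]).roots).erase x).map (fun a => ‖x - a‖)).prod
      = ‖(N : K)‖ := by
    have h1 : (((X ^ N - 1 : K[X]).roots).erase x).map (fun a => ‖x - a‖)
        = ((((X ^ N - 1 : K[X]).roots).erase x).map (fun a => x - a)).map (fun b => ‖b‖) := by
      rw [Multiset.map_map]; rfl
    rw [h1, ← aux_norm_multiset_prod, aux_deriv_prod hN hxR, norm_mul, norm_pow, hx1,
      one_pow, mul_one]
  rw [hprod, aux_norm_N hpK hN, Real.log_pow, Real.log_inv]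
  push_cast
  ring

-- the sum of logs when x is not a root
lemma aux_sum_nonroot {N : ℕ} (hN : N ≠ 0) {x : K} (hxN : x ^ N ≠ 1) :
    (((X ^ N - 1 : K[X]).roots).map (fun a => Real.log ‖x - a‖)).sum
      = Real.log ‖x ^ N - 1‖ := by
  have hne : ∀ a ∈ (X ^ N - 1 : K[X]).roots, x - a ≠ 0 := by
    intro a ha
    have haN : a ^ N = 1 := (aux_mem_roots hN).mp ha
    intro hc
    rw [sub_eq_zero] at hc
    exact hxN (hc ▸ haN)
  rw [aux_log_multiset_sum x _ hne]
  congr 1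
  have h1 : ((X ^ N - 1 : K[X]).roots).map (fun a => ‖x - a‖)
      = (((X ^ N - 1 : K[X]).roots).map (fun a => x - a)).map (fun b => ‖b‖) := by
    rw [Multiset.map_map]; rfl
  rw [h1, ← aux_norm_multiset_prod, ← aux_eval_prod hN]

-- each root of unity has norm one; distances are at most 1 when ‖x‖ ≤ 1
lemma aux_sum_le_zero {N : ℕ} (hN : N ≠ 0) {x : K} (hx1 : ‖x‖ ≤ 1) :
    (((X ^ N - 1 : K[X]).roots).map (fun a => Real.log ‖x - a‖)).sum ≤ 0 := by
  apply aux_msum_nonpos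
  intro a ha
  have haN : a ^ N = 1 := (aux_mem_roots hN).mp ha
  have : ‖x - a‖ ≤ 1 := aux_norm_sub_le_one hx1 (aux_norm_root N hN haN).le
  exact Real.log_nonpos (norm_nonneg _) this

end Aux6

section Aux7
variable {p : ℕ} [hp : Fact p.Prime] {K : Type*} [NormedField K] [IsUltrametricDist K]
  [IsAlgClosed K] [CharZero K]

/-- Key lower bound: if `w` has norm one, is within distance `< 1` of `1`, and stays at
distance `≥ c` from every `p^k`-th root of unity, then `∏_{η^N=1} ‖w - η‖ ≥ c·p^{-k}`,
where `k = v_p(N)`. -/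
lemma aux_key_lower (hpK : ‖(p : K)‖ = (p : ℝ)⁻¹) {N : ℕ} (hN : N ≠ 0) {w : K}
    (hw1 : ‖w‖ = 1) (hwc : ‖w - 1‖ < 1) {c : ℝ} (hc0 : 0 < c) (hc1 : c ≤ 1)
    (hcb : ∀ ξ : K, ξ ^ (p ^ (N.factorization p)) = 1 → c ≤ ‖w - ξ‖) :
    c * ((p : ℝ)⁻¹) ^ (N.factorization p)
      ≤ (((X ^ N - 1 : K[X]).roots).map (fun a => ‖w - a‖)).prod := by
  classical
  set k := N.factorization p with hk
  have hpk0 : (p : ℝ)⁻¹ ^ k ≤ 1 := by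
    apply pow_le_one₀ (by positivity)
    rw [inv_le_one_iff₀]; right; exact_mod_cast hp.out.one_lt.le
  have hpkpos : (0:ℝ) < (p : ℝ)⁻¹ ^ k := by
    have : (0:ℝ) < (p:ℝ) := by exact_mod_cast hp.out.pos
    positivity
  set R := (X ^ N - 1 : K[X]).roots with hR
  have hnd : R.Nodup := aux_nodup hN
  set B := R.filter (fun a => ‖w - a‖ < 1) with hB
  have hBnd : B.Nodup := hnd.filter _
  -- every element of B is a p^k-th root of unity
  have hBmem : ∀ a ∈ B, a ^ p ^ k = 1 ∧ ‖w - a‖ < 1 := by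
    intro a ha
    have h1 := Multiset.mem_filter.mp ha
    have haN : a ^ N = 1 := (aux_mem_roots hN).mp h1.1
    have hdist : ‖a - 1‖ < 1 := by
      have : a - 1 = (a - w) + (w - 1) := by ring
      rw [this]
      refine lt_of_le_of_lt (IsUltrametricDist.norm_add_le_max _ _) (max_lt ?_ hwc)
      rw [norm_sub_rev]; exact h1.2
    exact ⟨aux_ppow_of_close hpK hN haN hdist, h1.2⟩
  -- the product over R equals the product over B
  have hsplit : (R.map (fun a => ‖w - a‖)).prod = (B.map (fun a => ‖w - a‖)).prod := by
    conv_lhs => rw [← Multiset.filter_add_not (fun a => ‖w - a‖ < 1) R]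
    rw [Multiset.map_add, Multiset.prod_add, ← hB]
    have hone : ((R.filter (fun a => ¬ ‖w - a‖ < 1)).map (fun a => ‖w - a‖)).prod = 1 := by
      apply aux_mprod_eq_one
      intro a ha
      have h1 := Multiset.mem_filter.mp ha
      have haN : a ^ N = 1 := (aux_mem_roots hN).mp h1.1
      have hle : ‖w - a‖ ≤ 1 := aux_norm_sub_le_one hw1.le (aux_norm_root N hN haN).le
      exact le_antisymm hle (not_lt.mp h1.2)
    rw [hone, mul_one]
  rw [hsplit]
  rcases eq_or_ne B 0 with hB0 | hB0
  · rw [hB0]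
    simp only [Multiset.map_zero, Multiset.prod_zero]
    calc c * (p:ℝ)⁻¹ ^ k ≤ 1 * 1 := mul_le_mul hc1 hpk0 hpkpos.le zero_le_one
      _ = 1 := one_mul 1
  · -- choose the closest element η1 of B
    obtain ⟨η1, hη1mem, hη1min⟩ := Finset.exists_min_image B.toFinset (fun a => ‖w - a‖)
      (by rwa [Multiset.toFinset_nonempty])
    rw [Multiset.mem_toFinset] at hη1mem
    have hη1R' : η1 ^ p ^ k = 1 := (hBmem η1 hη1mem).1
    have hη1n : ‖η1‖ = 1 := aux_norm_root _ (pow_ne_zero _ hp.out.ne_zero) hη1R'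
    have hmin : ∀ a ∈ B, ‖w - η1‖ ≤ ‖w - a‖ := by
      intro a ha
      exact hη1min a (Multiset.mem_toFinset.mpr ha)
    rw [← Multiset.cons_erase hη1mem, Multiset.map_cons, Multiset.prod_cons]
    -- lower bound the first factor by c
    have hfac1 : c ≤ ‖w - η1‖ := hcb η1 hη1R'
    -- remaining factors dominate ‖η1 - a‖
    have hstep1 : ((B.erase η1).map (fun a => ‖η1 - a‖)).prod
        ≤ ((B.erase η1).map (fun a => ‖w - a‖)).prod := by
      apply aux_mprod_le_mprod
      intro a ha
      refine ⟨norm_nonneg _, ?_⟩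
      have haB : a ∈ B := Multiset.mem_of_mem_erase ha
      have : η1 - a = (η1 - w) + (w - a) := by ring
      rw [this]
      refine le_trans (IsUltrametricDist.norm_add_le_max _ _) (max_le ?_ le_rfl)
      rw [norm_sub_rev]
      exact hmin a haB
    -- compare with the product over all p^k-th roots of unity
    set R' := (X ^ p ^ k - 1 : K[X]).roots with hR'
    have hpk : (p : ℕ) ^ k ≠ 0 := pow_ne_zero _ hp.out.ne_zero
    have hR'nd : R'.Nodup := aux_nodup hpk
    have hη1R : η1 ∈ R' := (aux_mem_roots hpk).mpr hη1R'
    have hsub : B.erase η1 ≤ R'.erase η1 := by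
      rw [Multiset.le_iff_subset (hBnd.erase η1)]
      intro a ha
      have haB : a ∈ B := Multiset.mem_of_mem_erase ha
      have haR' : a ∈ R' := (aux_mem_roots hpk).mpr (hBmem a haB).1
      have hane : a ≠ η1 := (hBnd.mem_erase_iff.mp ha).1
      exact hR'nd.mem_erase_iff.mpr ⟨hane, haR'⟩
    have hbound01 : ∀ a ∈ R'.erase η1, 0 ≤ ‖η1 - a‖ ∧ ‖η1 - a‖ ≤ 1 := by
      intro a ha
      have haR' : a ∈ R' := Multiset.mem_of_mem_erase ha
      have han : ‖a‖ = 1 := aux_norm_root _ hpk ((aux_mem_roots hpk).mp haR')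
      exact ⟨norm_nonneg _, aux_norm_sub_le_one hη1n.le han.le⟩
    have hstep2 : ((R'.erase η1).map (fun a => ‖η1 - a‖)).prod
        ≤ ((B.erase η1).map (fun a => ‖η1 - a‖)).prod :=
      aux_mprod_sub_ge hsub hbound01
    have hstep3 : ((R'.erase η1).map (fun a => ‖η1 - a‖)).prod = ((p:ℝ)⁻¹) ^ k := by
      have h1 : (R'.erase η1).map (fun a => ‖η1 - a‖)
          = ((R'.erase η1).map (fun a => η1 - a)).map (fun b => ‖b‖) := by
        rw [Multiset.map_map]; rfl
      rw [h1, ← aux_norm_multiset_prod, aux_deriv_prod hpk hη1R, norm_mul, norm_pow, hη1n,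
        one_pow, mul_one]
      push_cast
      rw [norm_pow, hpK]
    calc c * (p:ℝ)⁻¹ ^ k ≤ ‖w - η1‖ * ((B.erase η1).map (fun a => ‖w - a‖)).prod := by
          apply mul_le_mul hfac1 _ _ (norm_nonneg _)
          · exact le_trans (le_trans (le_of_eq hstep3.symm) hstep2) hstep1
          · exact hpkpos.le
      _ = _ := rfl

end Aux7

section Aux8
variable {p : ℕ} [hp : Fact p.Prime] {K : Type*} [NormedField K] [IsUltrametricDist K]
  [IsAlgClosed K] [CharZero K]

lemma aux_dominate {a b : K} (h : ‖b‖ < ‖a‖) : ‖a + b‖ = ‖a‖ := by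
  rw [IsUltrametricDist.norm_add_eq_max_of_norm_ne_norm (ne_of_gt h)]
  exact max_eq_left h.le

lemma aux_master (hpK : ‖(p : K)‖ = (p : ℝ)⁻¹) {x : K} (hx1 : ‖x‖ = 1)
    (Hx : ¬ ∃ m : ℕ, 0 < m ∧ ¬ p ∣ m ∧ x ^ m = 1) :
    ∃ c : ℝ, 0 < c ∧ c ≤ 1 ∧ ∀ N : ℕ, N ≠ 0 →
      Real.log c - ((N.factorization p : ℝ) + 1) * Real.log p
        ≤ (((X ^ N - 1 : K[X]).roots).map (fun a => Real.log ‖x - a‖)).sum := by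
  classical
  have hppos : (0:ℝ) < (p:ℝ) := by exact_mod_cast hp.out.pos
  have hpinvpos : (0:ℝ) < (p:ℝ)⁻¹ := by positivity
  have hpinvle : (p:ℝ)⁻¹ ≤ 1 := by
    rw [inv_le_one_iff₀]; right; exact_mod_cast hp.out.one_lt.le
  have hlogp : 0 ≤ Real.log p := Real.log_nonneg (by exact_mod_cast hp.out.one_lt.le)
  by_cases hA : ∃ ζ : K, (∃ d : ℕ, 0 < d ∧ ¬ p ∣ d ∧ ζ ^ d = 1) ∧ ‖x - ζ‖ < 1
  case neg =>
    -- no prime-to-p root of unity is close to x : all distances are 1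
    refine ⟨1, one_pos, le_rfl, fun N hN => ?_⟩
    have hall : ∀ a ∈ (X ^ N - 1 : K[X]).roots, Real.log ‖x - a‖ = 0 := by
      intro a ha
      have haN : a ^ N = 1 := (aux_mem_roots hN).mp ha
      have han : ‖a‖ = 1 := aux_norm_root N hN haN
      -- show ‖x - a‖ = 1
      have h1 : ‖x - a‖ = 1 := by
        by_contra hne
        have hlt : ‖x - a‖ < 1 := lt_of_le_of_ne (aux_norm_sub_le_one hx1.le han.le) hne
        -- construct a prime-to-p root of unity near x
        set k := N.factorization p with hk
        set m' := N / p ^ k with hm'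
        have hsplitN : p ^ k * m' = N := Nat.ordProj_mul_ordCompl_eq_self N p
        have hpm' : ¬ p ∣ m' := Nat.not_dvd_ordCompl hp.out hN
        have hm'0 : m' ≠ 0 := (Nat.ordCompl_pos p hN).ne'
        rcases eq_or_lt_of_le (Nat.one_le_iff_ne_zero.mpr hm'0) with h1' | h1'
        · -- m' = 1 : a is a p-power root of unity, so 1 is close to x
          have hak : a ^ p ^ k = 1 := by
            rw [← hsplitN, ← h1', mul_one] at haN; exact haN
          have ha1 : ‖a - 1‖ < 1 := aux_ppow_lt hpK hak
          have : ‖x - 1‖ < 1 := by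
            have heq : x - 1 = (x - a) + (a - 1) := by ring
            rw [heq]
            exact lt_of_le_of_lt (IsUltrametricDist.norm_add_le_max _ _) (max_lt hlt ha1)
          exact hA ⟨1, ⟨1, one_pos, by simpa using hp.out.one_lt.ne', one_pow 1⟩, this⟩
        · -- m' > 1 : project a to its prime-to-p component
          have hcop : Nat.Coprime (p ^ k) m' :=
            Nat.Coprime.pow_left k ((Nat.Prime.coprime_iff_not_dvd hp.out).mpr hpm')
          obtain ⟨u, -, hu⟩ := Nat.exists_mul_mod_eq_one_of_coprime hcop h1'
          set q := p ^ k * u / m' with hq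
          have hdiv : m' * q + 1 = p ^ k * u := by
            have h2 := Nat.div_add_mod (p ^ k * u) m'
            rw [hu] at h2
            rw [hq]
            exact h2
          set ζ := a ^ (p ^ k * u) with hζ
          have hζm' : ζ ^ m' = 1 := by
            rw [hζ, ← pow_mul]
            have : p ^ k * u * m' = N * u := by
              rw [← hsplitN]; ring
            rw [this, pow_mul, haN, one_pow]
          have haζ : ‖a - ζ‖ < 1 := by
            have hp1 : a ^ (m' * q + 1) = a * (a ^ m') ^ q := by
              rw [← pow_mul, pow_succ, mul_comm]
            have heq : a - ζ = a * (1 - ((a ^ m') ^ q)) := by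
              rw [hζ, ← hdiv, hp1]; ring
            rw [heq, norm_mul, han, one_mul, ← norm_neg, neg_sub]
            have ham' : (a ^ m') ^ p ^ k = 1 := by
              rw [← pow_mul, mul_comm, hsplitN, haN]
            calc ‖(a ^ m') ^ q - 1‖ ≤ ‖a ^ m' - 1‖ := by
                  apply aux_geom
                  rw [norm_pow, han, one_pow]
              _ < 1 := aux_ppow_lt hpK ham'
          have : ‖x - ζ‖ < 1 := by
            have heq : x - ζ = (x - a) + (a - ζ) := by ring
            rw [heq]
            exact lt_of_le_of_lt (IsUltrametricDist.norm_add_le_max _ _) (max_lt hlt haζ)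
          exact hA ⟨ζ, ⟨m', Nat.pos_of_ne_zero hm'0, hpm', hζm'⟩, this⟩
      rw [h1, Real.log_one]
    have hzero : (((X ^ N - 1 : K[X]).roots).map (fun a => Real.log ‖x - a‖)).sum = 0 := by
      rw [Multiset.sum_eq_zero]
      intro b hb
      obtain ⟨a, ha, rfl⟩ := Multiset.mem_map.mp hb
      exact hall a ha
    rw [hzero, Real.log_one]
    have : (0:ℝ) ≤ ((N.factorization p : ℝ) + 1) * Real.log p := by positivity
    linarith
  case pos =>
    obtain ⟨ζ, ⟨d, hd0, hdp, hζd⟩, hxζ⟩ := hA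
    have hζn : ‖ζ‖ = 1 := aux_norm_root d hd0.ne' hζd
    have hζ0 : ζ ≠ 0 := by intro hc; rw [hc, norm_zero] at hζn; linarith
    set w := ζ⁻¹ * x with hw
    have hw1 : ‖w‖ = 1 := by
      rw [hw, norm_mul, norm_inv, hζn, hx1]; norm_num
    have hwc : ‖w - 1‖ < 1 := by
      have heq : w - 1 = ζ⁻¹ * (x - ζ) := by
        rw [hw]; field_simp
      rw [heq, norm_mul, norm_inv, hζn, inv_one, one_mul]
      exact hxζ
    have hwne1 : w ≠ 1 := by
      intro hc
      apply Hx
      refine ⟨d, hd0, hdp, ?_⟩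
      have : x = ζ := by
        calc x = ζ * w := by rw [hw, ← mul_assoc, mul_inv_cancel₀ hζ0, one_mul]
          _ = ζ := by rw [hc, mul_one]
      rw [this, hζd]
    -- x^N = ζ^N * w^N
    have hxw : ∀ N : ℕ, x ^ N = ζ ^ N * w ^ N := by
      intro N
      rw [hw, mul_pow, ← mul_assoc, ← mul_pow, mul_inv_cancel₀ hζ0, one_pow, one_mul]
    -- if ζ^N ≠ 1 (still a prime-to-p root of unity) then ‖x^N - 1‖ = 1
    have hfar : ∀ N : ℕ, N ≠ 0 → ζ ^ N ≠ 1 → ‖x ^ N - 1‖ = 1 := by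
      intro N hN hζN
      have h1 : x ^ N - 1 = (ζ ^ N - 1) + ζ ^ N * (w ^ N - 1) := by
        rw [hxw N]; ring
      have h2 : ‖ζ ^ N - 1‖ = 1 := by
        apply aux_dist_one hpK hdp _ hζN
        rw [← pow_mul, mul_comm, pow_mul, hζd, one_pow]
      have h3 : ‖ζ ^ N * (w ^ N - 1)‖ < 1 := by
        rw [norm_mul, norm_pow, hζn, one_pow, one_mul]
        exact lt_of_le_of_lt (aux_geom w hw1.le N) hwc
      rw [h1, aux_dominate (by rw [h2]; exact h3), h2]
    by_cases hB1 : ∃ e : ℕ, w ^ p ^ e = 1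
    case pos =>
      -- w is a p-power root of unity
      obtain ⟨e, hwe⟩ := hB1
      refine ⟨1, one_pos, le_rfl, fun N hN => ?_⟩
      rw [Real.log_one, zero_sub]
      by_cases hxN : x ^ N = 1
      · rw [aux_sum_root hpK hN hx1 hxN]
        have h1 : (N.factorization p : ℝ) * Real.log p
            ≤ ((N.factorization p : ℝ) + 1) * Real.log p := by nlinarith
        linarith
      · rw [aux_sum_nonroot hN hxN]
        by_cases hζN : ζ ^ N = 1
        · -- x^N = w^N, a nontrivial p-power root of unity
          have hxNw : x ^ N = w ^ N := by rw [hxw N, hζN, one_mul]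
          have hwN : (w ^ N) ^ p ^ e = 1 := by
            rw [← pow_mul, mul_comm, pow_mul, hwe, one_pow]
          have hwN1 : w ^ N ≠ 1 := by rw [← hxNw]; exact hxN
          have hge := aux_ppow_ge hpK hwN hwN1
          have hlog : Real.log (p:ℝ)⁻¹ ≤ Real.log ‖x ^ N - 1‖ := by
            apply Real.log_le_log hpinvpos
            rw [hxNw]
            exact hge
          rw [Real.log_inv] at hlog
          have h1 : Real.log p ≤ ((N.factorization p : ℝ) + 1) * Real.log p := by nlinarith
          linarith
        · rw [hfar N hN hζN, Real.log_one]
          have : (0:ℝ) ≤ ((N.factorization p : ℝ) + 1) * Real.log p := by positivity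
          linarith
    case neg =>
      -- w is not a p-power root of unity ; get the uniform constant
      have hkey : ∃ c : ℝ, 0 < c ∧ c ≤ (p:ℝ)⁻¹ ∧
          ∀ ξ : K, (∃ e : ℕ, ξ ^ p ^ e = 1) → c ≤ ‖w - ξ‖ := by
        by_cases hC : ∃ ξ : K, (∃ e : ℕ, ξ ^ p ^ e = 1) ∧ ‖w - ξ‖ < (p:ℝ)⁻¹
        · obtain ⟨ξ', ⟨e', hξ'⟩, hclose⟩ := hC
          refine ⟨‖w - ξ'‖, ?_, hclose.le, ?_⟩
          · rw [norm_pos_iff, sub_ne_zero]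
            intro hc
            exact hB1 ⟨e', by rw [hc]; exact hξ'⟩
          · intro ξ ⟨e, hξe⟩
            by_cases hsame : ξ = ξ'
            · rw [hsame]
            · -- distinct p-power roots of unity are at distance ≥ 1/p
              have hξn : ‖ξ‖ = 1 := aux_norm_root _ (pow_ne_zero _ hp.out.ne_zero) hξe
              have hξ'n : ‖ξ'‖ = 1 := aux_norm_root _ (pow_ne_zero _ hp.out.ne_zero) hξ'
              have hξ'0 : ξ' ≠ 0 := by intro hc; rw [hc, norm_zero] at hξ'n; linarith
              have hmA : ξ ^ p ^ (e + e') = 1 := by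
                rw [pow_add, pow_mul, hξe, one_pow]
              have hmB : ξ' ^ p ^ (e + e') = 1 := by
                rw [pow_add, mul_comm (p ^ e), pow_mul, hξ', one_pow]
              have hmul : (ξ * ξ'⁻¹) ^ p ^ (e + e') = 1 := by
                rw [mul_pow, hmA, one_mul, inv_pow, hmB, inv_one]
              have hne : ξ * ξ'⁻¹ ≠ 1 := by
                intro hc
                apply hsame
                field_simp at hc
                exact hc
              have hdist := aux_ppow_ge hpK hmul hne
              have heq : ‖ξ - ξ'‖ = ‖ξ * ξ'⁻¹ - 1‖ := by
                rw [show ξ * ξ'⁻¹ - 1 = (ξ - ξ') * ξ'⁻¹ by field_simp]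
                rw [norm_mul, norm_inv, hξ'n, inv_one, mul_one]
              by_contra hcon
              push_neg at hcon
              have h1 : ‖ξ - ξ'‖ < (p:ℝ)⁻¹ := by
                have heq2 : ξ - ξ' = (ξ - w) + (w - ξ') := by ring
                rw [heq2]
                refine lt_of_le_of_lt (IsUltrametricDist.norm_add_le_max _ _)
                  (max_lt ?_ hclose)
                rw [norm_sub_rev]
                exact lt_of_lt_of_le hcon hclose.le
              rw [heq] at h1
              linarith
        · push_neg at hC
          exact ⟨(p:ℝ)⁻¹, hpinvpos, le_rfl, fun ξ hξ => hC ξ hξ⟩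
      obtain ⟨c, hc0, hcp, hcb⟩ := hkey
      have hc1 : c ≤ 1 := le_trans hcp hpinvle
      refine ⟨c, hc0, hc1, fun N hN => ?_⟩
      have hlogc : Real.log c ≤ 0 := Real.log_nonpos hc0.le hc1
      -- x^N ≠ 1 always in this case
      have hxN : x ^ N ≠ 1 := by
        intro hc
        have hwNd : w ^ (N * d) = 1 := by
          have h1 : x ^ (N * d) = 1 := by rw [pow_mul, hc, one_pow]
          have h2 : ζ ^ (N * d) = 1 := by rw [mul_comm, pow_mul, hζd, one_pow]
          have := hxw (N * d)
          rw [h1, h2, one_mul] at this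
          exact this.symm
        have hNd0 : N * d ≠ 0 := Nat.mul_ne_zero hN hd0.ne'
        exact hB1 ⟨(N * d).factorization p, aux_ppow_of_close hpK hNd0 hwNd hwc⟩
      rw [aux_sum_nonroot hN hxN]
      by_cases hζN : ζ ^ N = 1
      · -- the crucial case : x^N - 1 = w^N - 1 and we use the key lower bound
        have hxNw : x ^ N - 1 = w ^ N - 1 := by rw [hxw N, hζN, one_mul]
        have hprod : ‖w ^ N - 1‖
            = (((X ^ N - 1 : K[X]).roots).map (fun a => ‖w - a‖)).prod := by
          rw [aux_eval_prod hN w]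
          have h1 : ((X ^ N - 1 : K[X]).roots).map (fun a => ‖w - a‖)
              = (((X ^ N - 1 : K[X]).roots).map (fun a => w - a)).map (fun b => ‖b‖) := by
            rw [Multiset.map_map]; rfl
          rw [h1, ← aux_norm_multiset_prod]
        have hlow := aux_key_lower hpK hN hw1 hwc hc0 hc1
          (fun ξ hξ => hcb ξ ⟨N.factorization p, hξ⟩)
        have hlog : Real.log (c * ((p:ℝ)⁻¹) ^ (N.factorization p))
            ≤ Real.log ‖x ^ N - 1‖ := by
          apply Real.log_le_log (by positivity)
          rw [hxNw, hprod]
          exact hlow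
        rw [Real.log_mul hc0.ne' (by positivity), Real.log_pow, Real.log_inv] at hlog
        have : Real.log c - ((N.factorization p : ℝ) + 1) * Real.log p
            ≤ Real.log c + (N.factorization p : ℝ) * (-Real.log p) := by nlinarith
        linarith
      · rw [hfar N hN hζN, Real.log_one]
        have : (0:ℝ) ≤ ((N.factorization p : ℝ) + 1) * Real.log p := by positivity
        linarith

end Aux8

theorem stmt19 {p : ℕ} [Fact p.Prime] (hp2 : 2 < p)
    {K : Type*} [NormedField K] [IsUltrametricDist K] [CompleteSpace K]
    [IsAlgClosed K] [CharZero K]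
    (hpK : ‖(p : K)‖ = (p : ℝ)⁻¹) (x : K) :
    (‖x‖ > 1 →
      Filter.Tendsto
        (fun n : ℕ =>
          (((Polynomial.X ^ (2 ^ n - 1) - 1 : Polynomial K).roots.map
              (fun ζ => Real.log ‖x - ζ‖)).sum) / 2 ^ n)
        Filter.atTop (nhds (Real.log ‖x‖))) ∧
    (‖x‖ < 1 →
      Filter.Tendsto
        (fun n : ℕ =>
          (((Polynomial.X ^ (2 ^ n - 1) - 1 : Polynomial K).roots.map
              (fun ζ => Real.log ‖x - ζ‖)).sum) / 2 ^ n)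
        Filter.atTop (nhds 0)) ∧
    (‖x‖ = 1 → ¬(∃ m : ℕ, 0 < m ∧ ¬(p ∣ m) ∧ x ^ m = 1) →
      Filter.Tendsto
        (fun n : ℕ =>
          (((Polynomial.X ^ (2 ^ n - 1) - 1 : Polynomial K).roots.map
              (fun ζ => Real.log ‖x - ζ‖)).sum) / 2 ^ n)
        Filter.atTop (nhds 0)) := by
  have h2pow : ∀ n : ℕ, (2 : ℕ) ^ n - 1 ≠ 0 → ((2 ^ n - 1 : ℕ) : ℝ) = (2:ℝ) ^ n - 1 := by
    intro n hn
    have h1 : (1:ℕ) ≤ 2 ^ n := Nat.one_le_two_pow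
    push_cast [Nat.cast_sub h1]
    ring
  refine ⟨?_, ?_, ?_⟩
  · -- part 1 : ‖x‖ > 1
    intro hx
    have hsum : ∀ n : ℕ,
        (((Polynomial.X ^ (2 ^ n - 1) - 1 : Polynomial K).roots.map
            (fun ζ => Real.log ‖x - ζ‖)).sum) / 2 ^ n
        = Real.log ‖x‖ - Real.log ‖x‖ * (1/2 : ℝ) ^ n := by
      intro n
      rcases eq_or_ne ((2:ℕ) ^ n - 1) 0 with hN | hN
      · have hn0 : n = 0 := by
          by_contra h
          have : (2:ℕ) ^ n ≥ 2 := Nat.one_lt_two_pow_iff.mpr h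
          omega
        subst hn0
        rw [hN]
        norm_num
      · have hcongr : ((Polynomial.X ^ (2 ^ n - 1) - 1 : Polynomial K).roots.map
            (fun ζ => Real.log ‖x - ζ‖))
            = ((Polynomial.X ^ (2 ^ n - 1) - 1 : Polynomial K).roots.map
              (fun _ => Real.log ‖x‖)) := by
          apply Multiset.map_congr rfl
          intro a ha
          have haN : a ^ (2 ^ n - 1) = 1 := (aux_mem_roots hN).mp ha
          have han : ‖a‖ = 1 := aux_norm_root _ hN haN
          have : ‖x - a‖ = ‖x‖ := by
            rw [sub_eq_add_neg, aux_dominate (by rw [norm_neg, han]; exact hx)]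
          rw [this]
        rw [hcongr, Multiset.map_const', Multiset.sum_replicate, aux_card, nsmul_eq_mul,
          h2pow n hN]
        have h2n : (2:ℝ) ^ n ≠ 0 := by positivity
        field_simp
        have h2a : (1/2:ℝ) ^ n * 2 ^ n = 1 := by rw [← mul_pow]; norm_num
        linear_combination (Real.log ‖x‖) * h2a
    rw [show (fun n : ℕ =>
        (((Polynomial.X ^ (2 ^ n - 1) - 1 : Polynomial K).roots.map
            (fun ζ => Real.log ‖x - ζ‖)).sum) / 2 ^ n)
        = (fun n : ℕ => Real.log ‖x‖ - Real.log ‖x‖ * (1/2 : ℝ) ^ n) from funext hsum]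
    have h0 : Filter.Tendsto (fun n : ℕ => Real.log ‖x‖ - Real.log ‖x‖ * (1/2 : ℝ) ^ n)
        Filter.atTop (nhds (Real.log ‖x‖ - Real.log ‖x‖ * 0)) := by
      exact tendsto_const_nhds.sub (tendsto_const_nhds.mul
        (tendsto_pow_atTop_nhds_zero_of_lt_one (by norm_num) (by norm_num)))
    simpa using h0
  · -- part 2 : ‖x‖ < 1
    intro hx
    have hsum : ∀ n : ℕ,
        (((Polynomial.X ^ (2 ^ n - 1) - 1 : Polynomial K).roots.map
            (fun ζ => Real.log ‖x - ζ‖)).sum) / 2 ^ n = 0 := by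
      intro n
      rcases eq_or_ne ((2:ℕ) ^ n - 1) 0 with hN | hN
      · rw [hN]; norm_num
      · have hz : (((Polynomial.X ^ (2 ^ n - 1) - 1 : Polynomial K).roots.map
            (fun ζ => Real.log ‖x - ζ‖))).sum = 0 := by
          rw [Multiset.sum_eq_zero]
          intro b hb
          obtain ⟨a, ha, rfl⟩ := Multiset.mem_map.mp hb
          have haN : a ^ (2 ^ n - 1) = 1 := (aux_mem_roots hN).mp ha
          have han : ‖a‖ = 1 := aux_norm_root _ hN haN
          have : ‖x - a‖ = 1 := by
            rw [sub_eq_neg_add, aux_dominate (by rw [norm_neg, han]; exact hx), norm_neg, han]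
          rw [this, Real.log_one]
        rw [hz, zero_div]
    rw [show (fun n : ℕ =>
        (((Polynomial.X ^ (2 ^ n - 1) - 1 : Polynomial K).roots.map
            (fun ζ => Real.log ‖x - ζ‖)).sum) / 2 ^ n) = (fun _ : ℕ => (0:ℝ))
        from funext hsum]
    exact tendsto_const_nhds
  · -- part 3
    intro hx1 Hx
    obtain ⟨c, hc0, hc1, hbound⟩ := aux_master hpK hx1 Hx
    have hlogp : 0 ≤ Real.log p := Real.log_nonneg (by
      have : (2:ℝ) < (p:ℝ) := by exact_mod_cast hp2
      linarith)
    have hlogc : Real.log c ≤ 0 := Real.log_nonpos hc0.le hc1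
    have hgt : Filter.Tendsto (fun n : ℕ => (Real.log c - ((n:ℝ) + 1) * Real.log p) / 2 ^ n)
        Filter.atTop (nhds 0) := by
      have h1 : Filter.Tendsto (fun n : ℕ => Real.log c * (1/2:ℝ) ^ n) Filter.atTop (nhds 0) := by
        simpa using tendsto_const_nhds.mul
          (tendsto_pow_atTop_nhds_zero_of_lt_one (by norm_num : (0:ℝ) ≤ 1/2) (by norm_num))
      have h2 : Filter.Tendsto (fun n : ℕ => ((n:ℝ) + 1) * (1/2:ℝ) ^ n) Filter.atTop (nhds 0) := by
        have ha := tendsto_self_mul_const_pow_of_lt_one (by norm_num : (0:ℝ) ≤ 1/2)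
          (by norm_num : (1/2:ℝ) < 1)
        have hb := tendsto_pow_atTop_nhds_zero_of_lt_one (by norm_num : (0:ℝ) ≤ 1/2)
          (by norm_num : (1/2:ℝ) < 1)
        have hab := ha.add hb
        rw [add_zero] at hab
        refine hab.congr (fun n => by ring)
      have h3 := h1.sub (h2.const_mul (Real.log p))
      rw [mul_zero, sub_zero] at h3
      refine h3.congr (fun n => ?_)
      have h2n : (2:ℝ) ^ n ≠ 0 := by positivity
      field_simp
      have h2a : (1/2:ℝ) ^ n * 2 ^ n = 1 := by rw [← mul_pow]; norm_num
      linear_combination (Real.log c - Real.log p * n - Real.log p) * h2a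
    apply tendsto_of_tendsto_of_tendsto_of_le_of_le' hgt tendsto_const_nhds
    · -- lower bound, eventually
      filter_upwards [Filter.eventually_atTop.mpr ⟨1, fun n hn => hn⟩] with n hn
      have hN : (2:ℕ) ^ n - 1 ≠ 0 := by
        have : (2:ℕ) ^ n ≥ 2 := Nat.one_lt_two_pow_iff.mpr (by omega)
        omega
      have hk : ((2:ℕ) ^ n - 1).factorization p ≤ n := by
        by_contra hcon
        push_neg at hcon
        have h1 : p ^ (((2:ℕ) ^ n - 1).factorization p) ≤ (2:ℕ) ^ n - 1 := Nat.ordProj_le p hN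
        have h2 : (2:ℕ) ^ n < 3 ^ (n+1) := by
          calc (2:ℕ) ^ n ≤ 3 ^ n := Nat.pow_le_pow_left (by norm_num) n
            _ < 3 ^ (n+1) := Nat.pow_lt_pow_right (by norm_num) (Nat.lt_succ_self n)
        have h3 : (3:ℕ) ^ (n+1) ≤ p ^ (n+1) := Nat.pow_le_pow_left (by omega) (n+1)
        have h4 : (p:ℕ) ^ (n+1) ≤ p ^ (((2:ℕ) ^ n - 1).factorization p) :=
          Nat.pow_le_pow_right (Nat.Prime.pos Fact.out) hcon
        omega
      have hlow := hbound ((2:ℕ) ^ n - 1) hN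
      have hle2 : Real.log c - ((n:ℝ) + 1) * Real.log p
          ≤ Real.log c - ((((2:ℕ) ^ n - 1).factorization p : ℝ) + 1) * Real.log p := by
        have : ((((2:ℕ) ^ n - 1).factorization p : ℝ)) ≤ (n:ℝ) := by exact_mod_cast hk
        nlinarith
      have h2n : (0:ℝ) < (2:ℝ) ^ n := by positivity
      have hfin := hle2.trans hlow
      gcongr
    · -- upper bound, eventually
      filter_upwards [Filter.eventually_atTop.mpr ⟨1, fun n hn => hn⟩] with n hn
      have hN : (2:ℕ) ^ n - 1 ≠ 0 := by
        have : (2:ℕ) ^ n ≥ 2 := Nat.one_lt_two_pow_iff.mpr (by omega)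
        omega
      have hsle := aux_sum_le_zero hN (le_of_eq hx1)
      have h2n : (0:ℝ) < (2:ℝ) ^ n := by positivity
      calc (((Polynomial.X ^ (2 ^ n - 1) - 1 : Polynomial K).roots.map
              (fun ζ => Real.log ‖x - ζ‖)).sum) / 2 ^ n ≤ 0 / 2 ^ n := by gcongr
        _ = 0 := zero_div _
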